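/- Let (H, A) be a canonical pair such that A is not nilpotent (equivalently, some parameter λᵢ of the canonical pair is nonzero). If B is a complex square matrix of the same size and η, η' ∈ ℂ satisfy B·A·H⁻¹ + A·H⁻¹·Bᵀ = η·A·H⁻¹ and Bᵀ·H·conj(A) + H·conj(A)·B = η'·H·conj(A), then η = η'. -/

import Mathlib

open Matrix

noncomputable section

open scoped Classical

/-- The `m × m` upper-triangular Jordan block `J_{λ,m}` with eigenvalue `λ`. -/
def Jb (l : ℂ) (m : ℕ) : Matrix (Fin m) (Fin m) ℂ :=
  Matrix.of fun i j =>
    if (j : ℕ) = (i : ℕ) then l else if (j : ℕ) = (i : ℕ) + 1 then 1 else 0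

/-- The `m × m` anti-diagonal matrix `S_m` ( `(i,j)` entry is `1` iff `i + j = m + 1`,
1-based). -/
def Sb (m : ℕ) : Matrix (Fin m) (Fin m) ℂ :=
  Matrix.of fun i j => if (i : ℕ) + (j : ℕ) + 1 = m then 1 else 0

/-- The size `s(λ,m)` of the matrix `M_{λ,m}`: `m` if `λ ∈ ℝ`, and `2m` otherwise. -/
def sz (l : ℂ) (m : ℕ) : ℕ := if l.im = 0 then m else 2 * m

/-- The matrix `M_{λ,m}`: the Jordan block `J_{λ,m}` if `λ ∈ ℝ`, and the block matrix
`[[0, J_{λ²,m}], [I, 0]]` otherwise. -/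
def Mb (l : ℂ) (m : ℕ) : Matrix (Fin (sz l m)) (Fin (sz l m)) ℂ :=
  Matrix.of fun i j =>
    if l.im = 0 then
      (if (j : ℕ) = (i : ℕ) then l else if (j : ℕ) = (i : ℕ) + 1 then 1 else 0)
    else if (i : ℕ) < m ∧ m ≤ (j : ℕ) then
      (if (j : ℕ) - m = (i : ℕ) then l ^ 2
       else if (j : ℕ) - m = (i : ℕ) + 1 then 1 else 0)
    else if m ≤ (i : ℕ) ∧ (i : ℕ) - m = (j : ℕ) then 1 else 0

/-- The matrix `N_{λ,m}`: `S_m` if `λ ∈ ℝ` and `S_{2m}` otherwise. -/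
def Nb (l : ℂ) (m : ℕ) : Matrix (Fin (sz l m)) (Fin (sz l m)) ℂ := Sb (sz l m)

/-- A complex number is normalized if `Re λ ≥ 0` and, when `Re λ = 0`, also `Im λ ≥ 0`. -/
def Normalized (l : ℂ) : Prop := 0 ≤ l.re ∧ (l.re = 0 → 0 ≤ l.im)

/-- The linear map `B ↦ B * X + X * Bᵀ`. -/
def rmap {n : Type*} [Fintype n] (X : Matrix n n ℂ) :
    Matrix n n ℂ →ₗ[ℂ] Matrix n n ℂ where
  toFun B := B * X + X * Bᵀ
  map_add' B C := by
    simp only [Matrix.add_mul, Matrix.mul_add, Matrix.transpose_add]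
    abel
  map_smul' c B := by
    simp only [Matrix.smul_mul, Matrix.mul_smul, Matrix.transpose_smul, smul_add,
      RingHom.id_apply]

/-- The linear map `B ↦ Bᵀ * Y + Y * B`. -/
def lmap {n : Type*} [Fintype n] (Y : Matrix n n ℂ) :
    Matrix n n ℂ →ₗ[ℂ] Matrix n n ℂ where
  toFun B := Bᵀ * Y + Y * B
  map_add' B C := by
    simp only [Matrix.add_mul, Matrix.mul_add, Matrix.transpose_add]
    abel
  map_smul' c B := by
    simp only [Matrix.smul_mul, Matrix.mul_smul, Matrix.transpose_smul, smul_add,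
      RingHom.id_apply]

/-- The subspace `𝒜°` associated with `(H, A)`:  matrices `B` with
`B·A·H⁻¹ + A·H⁻¹·Bᵀ = 0` and `Bᵀ·H·conj(A) + H·conj(A)·B = 0`. -/
def scriptAo {n : Type*} [Fintype n] [DecidableEq n] (H A : Matrix n n ℂ) :
    Submodule ℂ (Matrix n n ℂ) :=
  LinearMap.ker (rmap (A * H⁻¹)) ⊓ LinearMap.ker (lmap (H * A.map (starRingEnd ℂ)))

/-- The subspace `𝒜` associated with `(H, A)`:  matrices `B` with
`B·A·H⁻¹ + A·H⁻¹·Bᵀ ∈ ℂ·(A·H⁻¹)` and `Bᵀ·H·conj(A) + H·conj(A)·B ∈ ℂ·(H·conj(A))`. -/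
def scriptA {n : Type*} [Fintype n] [DecidableEq n] (H A : Matrix n n ℂ) :
    Submodule ℂ (Matrix n n ℂ) :=
  Submodule.comap (rmap (A * H⁻¹)) (Submodule.span ℂ {A * H⁻¹}) ⊓
    Submodule.comap (lmap (H * A.map (starRingEnd ℂ)))
      (Submodule.span ℂ {H * A.map (starRingEnd ℂ)})

/-- For a canonical pair `(H, A)` with `A` not nilpotent, if
`B·A·H⁻¹ + A·H⁻¹·Bᵀ = η·A·H⁻¹` and `Bᵀ·H·conj(A) + H·conj(A)·B = η'·H·conj(A)`
then `η = η'`. -/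
lemma Sb_mul_Sb (n : ℕ) : Sb n * Sb n = (1 : Matrix (Fin n) (Fin n) ℂ) := by
  ext i j
  rw [Matrix.mul_apply]
  have hi := i.isLt
  rw [Finset.sum_eq_single (⟨n - 1 - (i : ℕ), by omega⟩ : Fin n)]
  · simp only [Sb, Matrix.of_apply, Matrix.one_apply]
    rw [if_pos (show (i : ℕ) + (n - 1 - (i : ℕ)) + 1 = n by omega), one_mul]
    by_cases h : i = j
    · subst h; rw [if_pos (by omega), if_pos rfl]
    · rw [if_neg, if_neg h]
      intro hc
      exact h (Fin.ext (by omega))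
  · intro b _ hb
    simp only [Sb, Matrix.of_apply]
    rw [if_neg, zero_mul]
    intro hc
    have hbv : (b : ℕ) = n - 1 - (i : ℕ) := by omega
    exact hb (Fin.ext hbv)
  · intro hmem
    exact absurd (Finset.mem_univ _) hmem

lemma pow_entry_zero {n : ℕ} (P : Matrix (Fin n) (Fin n) ℂ)
    (hP : ∀ i j : Fin n, (j : ℕ) ≤ (i : ℕ) → P i j = 0) :
    ∀ (k : ℕ) (i j : Fin n), (j : ℕ) < (i : ℕ) + k → (P ^ k) i j = 0 := by
  intro k
  induction k with
  | zero =>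
    intro i j h
    rw [pow_zero]
    exact Matrix.one_apply_ne (fun he => by rw [he] at h; omega)
  | succ k ih =>
    intro i j h
    rw [pow_succ, Matrix.mul_apply]
    apply Finset.sum_eq_zero
    intro x _
    by_cases hx : (j : ℕ) ≤ (x : ℕ)
    · rw [hP x j hx, mul_zero]
    · rw [ih i x (by omega), zero_mul]

lemma strict_upper_pow_zero {n : ℕ} (P : Matrix (Fin n) (Fin n) ℂ)
    (hP : ∀ i j : Fin n, (j : ℕ) ≤ (i : ℕ) → P i j = 0) {k : ℕ} (hk : n ≤ k) :
    P ^ k = 0 := by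
  ext i j
  simp only [Matrix.zero_apply]
  exact pow_entry_zero P hP k i j (by have := i.isLt; have := j.isLt; omega)

lemma sz_pos {l : ℂ} {m : ℕ} (hm : 0 < m) : 0 < sz l m := by
  unfold sz; split_ifs <;> omega

lemma Mb_col0 (l : ℂ) (m : ℕ) (hm : 0 < m) (h0 : 0 < sz l m) (x : Fin (sz l m)) :
    (Mb l m * (Mb l m).map (starRingEnd ℂ)) x ⟨0, h0⟩
      = if (x : ℕ) = 0 then l ^ 2 else 0 := by
  rw [Matrix.mul_apply]
  by_cases him : l.im = 0
  · have hcl : (starRingEnd ℂ) l = l := Complex.conj_eq_iff_im.mpr him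
    rw [Finset.sum_eq_single (⟨0, h0⟩ : Fin (sz l m))]
    · simp only [Mb, Matrix.map_apply, Matrix.of_apply, if_pos him]
      rw [if_pos trivial, hcl]
      split_ifs <;> first | rfl | (exfalso; omega) | ring1 | simp_all
    · intro b _ hb
      have hb' : (b : ℕ) ≠ 0 := fun h => hb (Fin.ext h)
      simp only [Mb, Matrix.map_apply, Matrix.of_apply, if_pos him]
      rw [show ((if 0 = (b : ℕ) then l else if 0 = (b : ℕ) + 1 then 1 else 0) : ℂ) = 0 by
        rw [if_neg (by omega), if_neg (by omega)], map_zero, mul_zero]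
    · intro hmem; exact absurd (Finset.mem_univ _) hmem
  · have h2m : sz l m = 2 * m := by unfold sz; rw [if_neg him]
    have hx : (x : ℕ) < 2 * m := by have := x.isLt; omega
    rw [Finset.sum_eq_single (⟨m, by omega⟩ : Fin (sz l m))]
    · simp only [Mb, Matrix.map_apply, Matrix.of_apply, if_neg him]
      rw [show ((if m < m ∧ m ≤ 0 then if 0 - m = m then l ^ 2 else if 0 - m = m + 1 then 1 else 0
          else if m ≤ m ∧ m - m = 0 then 1 else 0) : ℂ) = 1 by
        rw [if_neg (by omega), if_pos (by omega)], _root_.map_one, mul_one]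
      split_ifs <;> first | rfl | (exfalso; omega) | ring1 | simp_all
    · intro b _ hb
      have hb' : (b : ℕ) ≠ m := fun h => hb (Fin.ext h)
      have hbx : (b : ℕ) < 2 * m := by have := b.isLt; omega
      simp only [Mb, Matrix.map_apply, Matrix.of_apply, if_neg him]
      rw [show ((if (b : ℕ) < m ∧ m ≤ 0 then
            if 0 - m = (b : ℕ) then l ^ 2 else if 0 - m = (b : ℕ) + 1 then 1 else 0
          else if m ≤ (b : ℕ) ∧ (b : ℕ) - m = 0 then 1 else 0) : ℂ) = 0 by
        rw [if_neg (by omega), if_neg (by omega)], map_zero, mul_zero]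
    · intro hmem; exact absurd (Finset.mem_univ _) hmem
theorem stmt12 (γ : ℕ) (hγ : 0 < γ) (lam : Fin γ → ℂ) (mm : Fin γ → ℕ) (eps : Fin γ → ℂ)
    (hnorm : ∀ i, Normalized (lam i)) (hm : ∀ i, 0 < mm i)
    (heps : ∀ i, eps i = 1 ∨ eps i = -1)
    (H A : Matrix ((i : Fin γ) × Fin (sz (lam i) (mm i)))
      ((i : Fin γ) × Fin (sz (lam i) (mm i))) ℂ)
    (hH : H = Matrix.blockDiagonal' fun i => eps i • Nb (lam i) (mm i))
    (hA : A = Matrix.blockDiagonal' fun i => Mb (lam i) (mm i))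
    (hA0 : ¬IsNilpotent A)
    (B : Matrix ((i : Fin γ) × Fin (sz (lam i) (mm i)))
      ((i : Fin γ) × Fin (sz (lam i) (mm i))) ℂ)
    (η η' : ℂ)
    (h1 : B * (A * H⁻¹) + (A * H⁻¹) * Bᵀ = η • (A * H⁻¹))
    (h2 : Bᵀ * (H * A.map (starRingEnd ℂ)) + (H * A.map (starRingEnd ℂ)) * B =
      η' • (H * A.map (starRingEnd ℂ))) :
    η = η' := by
  by_contra hne
  have hδ : η - η' ≠ 0 := sub_ne_zero.mpr hne
  set Ac := A.map (starRingEnd ℂ) with hAc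
  -- H is an involution
  have hH2 : H * H = 1 := by
    rw [hH, ← Matrix.blockDiagonal'_mul]
    have heq : (fun i => (eps i • Nb (lam i) (mm i)) * (eps i • Nb (lam i) (mm i)))
        = fun i => (1 : Matrix (Fin (sz (lam i) (mm i))) (Fin (sz (lam i) (mm i))) ℂ) := by
      funext i
      have h2 : eps i * eps i = 1 := by rcases heps i with h | h <;> rw [h] <;> ring
      rw [smul_mul_smul_comm, h2, one_smul]
      show Sb _ * Sb _ = _
      exact Sb_mul_Sb _
    rw [heq]
    exact Matrix.blockDiagonal'_one
  have hHinv : H⁻¹ = H := Matrix.inv_eq_right_inv hH2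
  have hHHX : ∀ X : Matrix ((i : Fin γ) × Fin (sz (lam i) (mm i)))
      ((i : Fin γ) × Fin (sz (lam i) (mm i))) ℂ, H * (H * X) = X := fun X => by
    rw [← Matrix.mul_assoc, hH2, Matrix.one_mul]
  -- the commutator identity
  have h1' := congrArg (fun M => M * (H * Ac)) h1
  have h2' := congrArg (fun M => (A * H⁻¹) * M) h2
  simp only [hHinv, Matrix.add_mul, Matrix.mul_add, Matrix.smul_mul, Matrix.mul_smul,
    Matrix.mul_assoc, hHHX] at h1' h2'
  have hcomm : B * (A * Ac) - (A * Ac) * B = (η - η') • (A * Ac) := by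
    calc B * (A * Ac) - (A * Ac) * B
        = (B * (A * Ac) + A * (H * (Bᵀ * (H * Ac))))
          - (A * (H * (Bᵀ * (H * Ac))) + A * (Ac * B)) := by
          rw [Matrix.mul_assoc]; abel
      _ = η • (A * Ac) - η' • (A * Ac) := by rw [h1', h2']
      _ = (η - η') • (A * Ac) := (sub_smul _ _ _).symm
  -- some block has a nonzero eigenvalue
  have hex : ∃ i, lam i ≠ 0 := by
    by_contra hall
    push_neg at hall
    apply hA0
    refine ⟨Finset.univ.sup fun i => sz (lam i) (mm i), ?_⟩
    rw [hA, ← Matrix.blockDiagonal'_pow]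
    have hz : ((fun i => Mb (lam i) (mm i)) ^ (Finset.univ.sup fun i => sz (lam i) (mm i))) = 0 := by
      funext i
      show (Mb (lam i) (mm i)) ^ _ = 0
      apply strict_upper_pow_zero
      · intro a b hab
        have him : (lam i).im = 0 := by rw [hall i]; simp
        simp only [Mb, Matrix.of_apply, if_pos him]
        split_ifs with hc1 hc2
        · exact hall i
        · omega
        · rfl
      · exact Finset.le_sup (f := fun i => sz (lam i) (mm i)) (Finset.mem_univ i)
    rw [hz]
    exact Matrix.blockDiagonal'_zero
  obtain ⟨i₀, hl₀⟩ := hex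
  have hszp : 0 < sz (lam i₀) (mm i₀) := sz_pos (hm i₀)
  -- A * Ac is block diagonal
  have hCb : A * Ac = Matrix.blockDiagonal'
      (fun i => Mb (lam i) (mm i) * (Mb (lam i) (mm i)).map (starRingEnd ℂ)) := by
    rw [hAc, hA, Matrix.blockDiagonal'_map _ _ (map_zero _), ← Matrix.blockDiagonal'_mul]
  -- the eigenvector
  set p0 : (i : Fin γ) × Fin (sz (lam i) (mm i)) := ⟨i₀, ⟨0, hszp⟩⟩ with hp0
  set v : ((i : Fin γ) × Fin (sz (lam i) (mm i))) → ℂ := Pi.single p0 1 with hvdef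
  have hv : (A * Ac) *ᵥ v = ((lam i₀) ^ 2) • v := by
    rw [hvdef, hCb, Matrix.mulVec_single_one]
    funext p
    obtain ⟨i, x⟩ := p
    simp only [Pi.smul_apply, smul_eq_mul, mul_one, Matrix.col_apply]
    by_cases hi : i = i₀
    · subst hi
      rw [Matrix.blockDiagonal'_apply_eq, Mb_col0 _ _ (hm i) hszp x, Pi.single_apply]
      by_cases hx : (x : ℕ) = 0
      · rw [if_pos hx, if_pos (by congr 1; exact Fin.ext hx), mul_one]
      · have hne2 : (⟨i, x⟩ : (i : Fin γ) × Fin (sz (lam i) (mm i))) ≠ p0 := by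
          rw [hp0]
          intro hc
          injection hc with hc1 hc2
          exact hx (by rw [hc2])
        rw [if_neg hx, if_neg hne2, mul_zero]
    · rw [Matrix.blockDiagonal'_apply_ne _ _ _ hi, Pi.single_apply, if_neg, mul_zero]
      exact fun h => hi (congrArg Sigma.fst h)
  -- A * Ac is not nilpotent
  have hCpow : ∀ k : ℕ, ((A * Ac) ^ k) *ᵥ v = (((lam i₀) ^ 2) ^ k) • v := by
    intro k
    induction k with
    | zero => simp
    | succ k ih =>
      rw [pow_succ, ← Matrix.mulVec_mulVec, hv, Matrix.mulVec_smul, ih, smul_smul, pow_succ]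
      ring_nf
  have hCnotnil : ¬ IsNilpotent (A * Ac) := by
    rintro ⟨k, hk⟩
    have h0 := congrFun (hCpow k) p0
    rw [hk, Matrix.zero_mulVec] at h0
    rw [hvdef] at h0
    simp only [Pi.zero_apply, Pi.smul_apply, Pi.single_eq_same, smul_eq_mul, mul_one] at h0
    exact pow_ne_zero k (pow_ne_zero 2 hl₀) h0.symm
  have hCk : ∀ k, (A * Ac) ^ k ≠ 0 := fun k h => hCnotnil ⟨k, h⟩
  -- eigenvector chain for ad_B
  set f : Module.End ℂ (Matrix ((i : Fin γ) × Fin (sz (lam i) (mm i)))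
      ((i : Fin γ) × Fin (sz (lam i) (mm i))) ℂ) :=
    LinearMap.mulLeft ℂ B - LinearMap.mulRight ℂ B with hfdef
  have hf : ∀ X, f X = B * X - X * B := fun X => rfl
  have heig : ∀ k : ℕ, f ((A * Ac) ^ (k + 1)) = (((k : ℂ) + 1) * (η - η')) • (A * Ac) ^ (k + 1) := by
    intro k
    induction k with
    | zero => rw [hf, pow_one, hcomm]; norm_num
    | succ k ih =>
      rw [hf] at ih ⊢
      rw [pow_succ]
      have expand : B * ((A * Ac) ^ (k + 1) * (A * Ac)) - (A * Ac) ^ (k + 1) * (A * Ac) * B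
          = (B * (A * Ac) ^ (k + 1) - (A * Ac) ^ (k + 1) * B) * (A * Ac)
            + (A * Ac) ^ (k + 1) * (B * (A * Ac) - (A * Ac) * B) := by
        noncomm_ring
      rw [expand, ih, hcomm, smul_mul_assoc, mul_smul_comm, ← pow_succ, ← add_smul]
      congr 1
      push_cast
      ring
  have hev : ∀ k : ℕ, f.HasEigenvector (((k : ℂ) + 1) * (η - η')) ((A * Ac) ^ (k + 1)) :=
    fun k => ⟨Module.End.mem_eigenspace_iff.mpr (heig k), hCk (k + 1)⟩
  have hinj : Function.Injective (fun k : ℕ => ((k : ℂ) + 1) * (η - η')) := by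
    intro a b hab
    have h3 := mul_right_cancel₀ hδ hab
    exact Nat.cast_injective (add_right_cancel h3)
  have hli := Module.End.eigenvectors_linearIndependent' f _ hinj _ hev
  exact Module.Finite.not_linearIndependent_of_infinite _ hli
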